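/- arXiv:1609.05169 — 4 statements merged into one kernel-verified Lean document; each statement's English description precedes it below -/
import Mathlib

section
/- For any ρ > -1 and β ∈ ℝ, the power series W(z; ρ, β) = Σ_{k=0}^∞ z^k/(k! Γ(ρk + β)) has infinite radius of convergence, i.e., the Wright function is entire. -/
open Real Filter Topology

/-- Summability of `r^k (k!)^(a-1)` for `a < 1`. -/
lemma wright_aux_summable {r a : ℝ} (hr : 0 < r) (ha : a < 1) :
    Summable (fun k : ℕ => r ^ k * (k.factorial : ℝ) ^ (a - 1)) := by
  have hfpos : ∀ k : ℕ, 0 < r ^ k * (k.factorial : ℝ) ^ (a - 1) := by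
    intro k
    have : (0:ℝ) < (k.factorial : ℝ) := by positivity
    positivity
  apply summable_of_ratio_test_tendsto_lt_one (l := 0) one_pos
  · exact Filter.Eventually.of_forall fun n => (hfpos n).ne'
  · have key : ∀ n : ℕ,
        ‖r ^ (n+1) * ((n+1).factorial : ℝ) ^ (a - 1)‖ / ‖r ^ n * (n.factorial : ℝ) ^ (a - 1)‖
        = r * ((n : ℝ) + 1) ^ (a - 1) := by
      intro n
      have h1 : (0:ℝ) < (n.factorial : ℝ) := by positivity
      have h2 : (0:ℝ) < ((n:ℝ) + 1) := by positivity
      rw [Real.norm_of_nonneg (hfpos (n+1)).le, Real.norm_of_nonneg (hfpos n).le]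
      have hfac : (((n+1).factorial : ℝ)) = ((n:ℝ)+1) * (n.factorial : ℝ) := by
        push_cast [Nat.factorial_succ]; ring
      rw [hfac, Real.mul_rpow h2.le h1.le, pow_succ]
      field_simp
    have hlim : Tendsto (fun n : ℕ => r * ((n : ℝ) + 1) ^ (a - 1)) atTop (𝓝 0) := by
      have h1 : Tendsto (fun n : ℕ => ((n : ℝ) + 1)) atTop atTop :=
        tendsto_atTop_add_const_right _ 1 tendsto_natCast_atTop_atTop
      have h2 : Tendsto (fun x : ℝ => x ^ (a - 1)) atTop (𝓝 0) := by
        have := tendsto_rpow_neg_atTop (y := 1 - a) (by linarith)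
        simpa [neg_sub] using this
      have := (h2.comp h1).const_mul r
      simpa using this
    exact Tendsto.congr (fun n => (key n).symm) hlim

/-- Reflection bound: for `x ≤ 0`, `|Γ x|⁻¹ ≤ Γ(1-x)/π`. -/
lemma wright_gamma_inv_le {x : ℝ} (hx : x ≤ 0) :
    |Real.Gamma x|⁻¹ ≤ Real.Gamma (1 - x) / π := by
  have h1x : 0 < Real.Gamma (1 - x) := Real.Gamma_pos_of_pos (by linarith)
  by_cases h : Real.Gamma x = 0
  · rw [h]
    simp
    positivity
  · have hΓ : 0 < |Real.Gamma x| := abs_pos.mpr h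
    have hs : Real.sin (π * x) ≠ 0 := by
      intro hsin
      have := Real.Gamma_mul_Gamma_one_sub x
      rw [hsin, div_zero] at this
      exact mul_ne_zero h h1x.ne' this
    have habs : |Real.Gamma x| * Real.Gamma (1 - x) = π / |Real.sin (π * x)| := by
      have := Real.Gamma_mul_Gamma_one_sub x
      have := congrArg abs this
      rwa [abs_mul, abs_div, abs_of_nonneg h1x.le, abs_of_nonneg Real.pi_pos.le] at this
    have hsin1 : |Real.sin (π * x)| ≤ 1 := abs_sin_le_one _
    have hsinpos : 0 < |Real.sin (π * x)| := abs_pos.mpr hs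
    have hπ : π ≤ |Real.Gamma x| * Real.Gamma (1 - x) := by
      rw [habs, le_div_iff₀ hsinpos]
      nlinarith [Real.pi_pos]
    rw [le_div_iff₀ Real.pi_pos, inv_mul_eq_div, div_le_iff₀ hΓ]
    nlinarith
/-- Log-convexity bound for Gamma. -/
lemma wright_gamma_convex {a u v : ℝ} (ha0 : 0 < a) (ha1 : a < 1) (hu : 0 < u) (hv : 0 < v) :
    Real.Gamma (a * u + (1 - a) * v) ≤ Real.Gamma u ^ a * Real.Gamma v ^ (1 - a) := by
  have h1a : (0:ℝ) < 1 - a := by linarith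
  have h := Real.convexOn_log_Gamma.2 (Set.mem_Ioi.2 hu) (Set.mem_Ioi.2 hv)
    ha0.le h1a.le (by ring)
  simp only [Function.comp_apply, smul_eq_mul] at h
  have hpos : 0 < a * u + (1 - a) * v := by positivity
  have hΓ : 0 < Real.Gamma (a * u + (1 - a) * v) := Real.Gamma_pos_of_pos hpos
  have hΓu : 0 < Real.Gamma u := Real.Gamma_pos_of_pos hu
  have hΓv : 0 < Real.Gamma v := Real.Gamma_pos_of_pos hv
  calc Real.Gamma (a * u + (1 - a) * v)
      = Real.exp (Real.log (Real.Gamma (a * u + (1 - a) * v))) := (Real.exp_log hΓ).symm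
    _ ≤ Real.exp (a * Real.log (Real.Gamma u) + (1 - a) * Real.log (Real.Gamma v)) :=
        Real.exp_le_exp.mpr h
    _ = Real.Gamma u ^ a * Real.Gamma v ^ (1 - a) := by
        rw [Real.exp_add, Real.rpow_def_of_pos hΓu, Real.rpow_def_of_pos hΓv]
        ring_nf


lemma wright_norm_term (z : ℂ) (k : ℕ) (x : ℝ) :
    ‖z ^ k / ((k.factorial : ℂ) * Complex.Gamma (x : ℂ))‖
      = ‖z‖ ^ k * ((k.factorial : ℝ))⁻¹ * |Real.Gamma x|⁻¹ := by
  rw [norm_div, norm_pow, norm_mul, Complex.Gamma_ofReal]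
  simp [Complex.norm_natCast, Complex.norm_real, Real.norm_eq_abs, div_eq_mul_inv, mul_inv]
  ring

/-- The Wright function series `Σ z^k/(k! Γ(ρk+β))` converges for every `z ∈ ℂ`
when `ρ > -1`, i.e. it has infinite radius of convergence (the Wright function
is entire). Here `1/Γ` vanishes at the non-positive integers (in Lean, division
by `0` is `0`, matching the convention). -/
theorem wright_series_entire (ρ β : ℝ) (hρ : -1 < ρ) :
    ∀ z : ℂ, Summable (fun k : ℕ =>
      z ^ k / ((k.factorial : ℂ) * Complex.Gamma ((ρ * k + β : ℝ) : ℂ))) := by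
  intro z
  set r : ℝ := ‖z‖ + 1 with hrdef
  have hr0 : 0 < r := by positivity
  have hzr : ∀ k : ℕ, ‖z‖ ^ k ≤ r ^ k := fun k =>
    pow_le_pow_left₀ (norm_nonneg z) (by simp [hrdef]) k
  rcases lt_trichotomy ρ 0 with hneg | hzero | hpos
  · -- case -1 < ρ < 0
    set a : ℝ := -ρ with hadef
    have ha0 : 0 < a := by simp [hadef]; linarith
    have ha1 : a < 1 := by simp [hadef]; linarith
    set c : ℝ := 1 - β with hcdef
    obtain ⟨m, hm⟩ : ∃ m : ℕ, a - c < m := exists_nat_gt (a - c)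
    set v : ℝ := (c + m - a) / (1 - a) with hvdef
    have hv : 0 < v := by
      apply div_pos
      · linarith
      · linarith
    set C : ℝ := Real.Gamma v ^ (1 - a) / π with hCdef
    have hC : 0 ≤ C := by
      have := (Real.Gamma_pos_of_pos hv)
      positivity
    apply Summable.of_norm_bounded_eventually_nat
      (g := fun k : ℕ => C * (r ^ k * (k.factorial : ℝ) ^ (a - 1)))
      ((wright_aux_summable hr0 ha1).mul_left C)
    rw [Filter.eventually_atTop]
    refine ⟨max ⌈β / a⌉₊ ⌈(2 - c) / a⌉₊, fun k hk => ?_⟩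
    have hk1 : (β / a) ≤ (k : ℝ) := by
      have := Nat.ceil_le.mp (le_trans (le_max_left _ _) hk)
      exact_mod_cast this
    have hk2 : ((2 - c) / a) ≤ (k : ℝ) := by
      have := Nat.ceil_le.mp (le_trans (le_max_right _ _) hk)
      exact_mod_cast this
    have hx0 : ρ * k + β ≤ 0 := by
      have : β ≤ a * k := by
        rw [div_le_iff₀ ha0] at hk1; linarith
      simp only [hadef] at this; linarith
    have hy2 : 2 ≤ a * k + c := by
      rw [div_le_iff₀ ha0] at hk2; linarith
    have hfac : (0:ℝ) < (k.factorial : ℝ) := by positivity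
    rw [wright_norm_term]
    have step1 : |Real.Gamma (ρ * k + β)|⁻¹ ≤ Real.Gamma (a * k + c) / π := by
      have := wright_gamma_inv_le hx0
      have he : 1 - (ρ * k + β) = a * k + c := by simp [hadef, hcdef]; ring
      rwa [he] at this
    have step2 : Real.Gamma (a * k + c) ≤ Real.Gamma (a * k + c + m) := by
      rcases Nat.eq_zero_or_pos m with hm0 | hm0
      · simp [hm0]
      · have hmpos : (0:ℝ) < m := by exact_mod_cast hm0
        exact (Real.Gamma_strictMonoOn_Ici.monotoneOn) (Set.mem_Ici.2 hy2)
          (Set.mem_Ici.2 (by linarith)) (by linarith)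
    have step3 : Real.Gamma (a * k + c + m) ≤ (k.factorial : ℝ) ^ a * Real.Gamma v ^ (1 - a) := by
      have h1a : (0:ℝ) < 1 - a := by linarith
      have hrepr : a * k + c + m = a * ((k : ℝ) + 1) + (1 - a) * v := by
        rw [hvdef, mul_comm (1 - a), div_mul_cancel₀ _ h1a.ne']
        ring
      rw [hrepr]
      have := wright_gamma_convex ha0 ha1 (by positivity : (0:ℝ) < (k:ℝ) + 1) hv
      have hΓk : Real.Gamma ((k : ℝ) + 1) = (k.factorial : ℝ) := by
        exact_mod_cast Real.Gamma_nat_eq_factorial k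
      rwa [hΓk] at this
    calc ‖z‖ ^ k * ((k.factorial : ℝ))⁻¹ * |Real.Gamma (ρ * k + β)|⁻¹
        ≤ r ^ k * ((k.factorial : ℝ))⁻¹ * (((k.factorial : ℝ)) ^ a * Real.Gamma v ^ (1 - a) / π) := by
          apply mul_le_mul
          · apply mul_le_mul_of_nonneg_right (hzr k) (by positivity)
          · refine le_trans step1 ?_
            gcongr
            exact le_trans step2 step3
          · positivity
          · positivity
      _ = C * (r ^ k * (k.factorial : ℝ) ^ (a - 1)) := by
          rw [hCdef, Real.rpow_sub hfac, Real.rpow_one]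
          field_simp
  · -- case ρ = 0
    subst hzero
    apply Summable.of_norm_bounded
      (g := fun k : ℕ => |Real.Gamma β|⁻¹ * (r ^ k * (k.factorial : ℝ) ^ ((0:ℝ) - 1)))
      ((wright_aux_summable hr0 (by norm_num)).mul_left _)
    intro k
    rw [wright_norm_term]
    have hfac : (0:ℝ) < (k.factorial : ℝ) := by positivity
    have he : (0 : ℝ) * k + β = β := by ring
    rw [he, zero_sub, Real.rpow_neg_one]
    calc ‖z‖ ^ k * ((k.factorial : ℝ))⁻¹ * |Real.Gamma β|⁻¹
        ≤ r ^ k * ((k.factorial : ℝ))⁻¹ * |Real.Gamma β|⁻¹ := by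
          apply mul_le_mul_of_nonneg_right
            (mul_le_mul_of_nonneg_right (hzr k) (by positivity)) (by positivity)
      _ = |Real.Gamma β|⁻¹ * (r ^ k * ((k.factorial : ℝ))⁻¹) := by ring
  · -- case ρ > 0
    apply Summable.of_norm_bounded_eventually_nat
      (g := fun k : ℕ => r ^ k * (k.factorial : ℝ) ^ ((0:ℝ) - 1))
      (wright_aux_summable hr0 (by norm_num))
    rw [Filter.eventually_atTop]
    refine ⟨⌈(2 - β) / ρ⌉₊, fun k hk => ?_⟩
    have hk1 : ((2 - β) / ρ) ≤ (k : ℝ) := by exact_mod_cast Nat.ceil_le.mp hk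
    have hx2 : 2 ≤ ρ * k + β := by
      rw [div_le_iff₀ hpos] at hk1; linarith
    have hΓ : 1 ≤ Real.Gamma (ρ * k + β) := by
      have := (Real.Gamma_strictMonoOn_Ici.monotoneOn) (Set.mem_Ici.2 (le_refl (2:ℝ)))
        (Set.mem_Ici.2 hx2) hx2
      rwa [Real.Gamma_two] at this
    have hfac : (0:ℝ) < (k.factorial : ℝ) := by positivity
    rw [wright_norm_term]
    have hrp : (k.factorial : ℝ) ^ ((0:ℝ) - 1) = ((k.factorial : ℝ))⁻¹ := by
      norm_num [Real.rpow_neg_one]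
    rw [hrp]
    have hinv : |Real.Gamma (ρ * k + β)|⁻¹ ≤ 1 := by
      rw [abs_of_nonneg (by linarith)]
      exact inv_le_one_of_one_le₀ hΓ
    calc ‖z‖ ^ k * ((k.factorial : ℝ))⁻¹ * |Real.Gamma (ρ * k + β)|⁻¹
        ≤ r ^ k * ((k.factorial : ℝ))⁻¹ * 1 := by
          apply mul_le_mul
          · exact mul_le_mul_of_nonneg_right (hzr k) (by positivity)
          · exact hinv
          · positivity
          · positivity
      _ = r ^ k * ((k.factorial : ℝ))⁻¹ := by ring
end

section
/- The derivative of the Wright function with respect to z satisfies ∂/∂z W(z, ρ, β) = W(z, ρ, ρ + β) for all z ∈ ℝ, ρ > -1, β ∈ ℝ. -/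
open Real Filter

private lemma aux_eventually_summable {f g : ℕ → ℝ} (hf : ∀ k, 0 ≤ f k)
    (h : ∀ᶠ k in atTop, f k ≤ g k) (hg : Summable g) : Summable f := by
  obtain ⟨N, hN⟩ := eventually_atTop.mp h
  rw [← summable_nat_add_iff N]
  exact Summable.of_nonneg_of_le (fun k => hf _) (fun k => hN _ (Nat.le_add_left N k))
    ((summable_nat_add_iff N).mpr hg)

private lemma div_le_div_nonneg_same {a b c : ℝ} (h : a ≤ b) (hc : 0 ≤ c) :
    a / c ≤ b / c := by
  rcases eq_or_lt_of_le hc with h0 | h0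
  · simp [← h0]
  · exact (div_le_div_iff_of_pos_right h0).mpr h

private lemma one_div_abs_Gamma_le {x : ℝ} (hx : x ≤ 0) :
    1 / |Real.Gamma x| ≤ Real.Gamma (1 - x) := by
  have h1x : (0:ℝ) < 1 - x := by linarith
  have hG1 : 0 < Real.Gamma (1 - x) := Real.Gamma_pos_of_pos h1x
  rcases eq_or_ne (Real.Gamma x) 0 with h | h
  · simp [h, hG1.le]
  · have hrefl := Real.Gamma_mul_Gamma_one_sub x
    have habs : |Real.Gamma x| * Real.Gamma (1 - x) = π / |Real.sin (π * x)| := by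
      rw [← abs_of_pos hG1, ← abs_mul, hrefl, abs_div, abs_of_pos Real.pi_pos]
    have hsin1 : |Real.sin (π * x)| ≤ 1 := abs_sin_le_one _
    have hΓabs : 0 < |Real.Gamma x| := abs_pos.mpr h
    have hsinpos : 0 < |Real.sin (π * x)| := by
      rcases eq_or_ne (Real.sin (π * x)) 0 with hs | hs
      · exfalso
        rw [hs, div_zero] at hrefl
        rcases mul_eq_zero.mp hrefl with h' | h'
        · exact h h'
        · exact hG1.ne' h'
      · exact abs_pos.mpr hs
    have h2 : 1 ≤ |Real.Gamma x| * Real.Gamma (1 - x) := by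
      rw [habs, le_div_iff₀ hsinpos, one_mul]
      linarith [Real.pi_gt_three]
    rw [div_le_iff₀ hΓabs]
    nlinarith
private lemma gamma_le_gamma {x y : ℝ} (hx : 2 ≤ x) (hxy : x ≤ y) :
    Real.Gamma x ≤ Real.Gamma y :=
  Real.Gamma_strictMonoOn_Ici.monotoneOn (Set.mem_Ici.mpr hx)
    (Set.mem_Ici.mpr (le_trans hx hxy)) hxy

private lemma wright_summable_aux (ρ β M : ℝ) (hρ : -1 < ρ) (hM : 1 ≤ M) :
    Summable (fun k : ℕ =>
      ((k : ℝ) + 1) * M ^ k / (k.factorial * |Real.Gamma (ρ * k + β)|)) := by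
  have hM0 : 0 < M := lt_of_lt_of_le one_pos hM
  have hterm_nonneg : ∀ k : ℕ,
      0 ≤ ((k : ℝ) + 1) * M ^ k / (k.factorial * |Real.Gamma (ρ * k + β)|) := by
    intro k; positivity
  have hnum : ∀ k : ℕ, ((k : ℝ) + 1) * M ^ k ≤ (2 * M) ^ k := by
    intro k
    have h1 : ((k : ℝ) + 1) ≤ 2 ^ k := by exact_mod_cast (Nat.lt_two_pow_self (n := k))
    calc ((k : ℝ) + 1) * M ^ k ≤ 2 ^ k * M ^ k :=
          mul_le_mul_of_nonneg_right h1 (by positivity)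
      _ = (2 * M) ^ k := (mul_pow 2 M k).symm
  rcases le_or_gt 0 ρ with hρ0 | hρ0
  · rcases eq_or_lt_of_le hρ0 with hz | hpos
    · -- ρ = 0
      simp only [← hz, zero_mul, zero_add]
      rcases eq_or_ne (Real.Gamma β) 0 with hb | hb
      · simpa [hb] using summable_zero
      · have hbpos : 0 < |Real.Gamma β| := abs_pos.mpr hb
        have hS : Summable (fun k : ℕ => ((k : ℝ) + 1) * M ^ k / k.factorial) := by
          apply Summable.of_nonneg_of_le (fun k => by positivity)
            (fun k => ?_) (Real.summable_pow_div_factorial (2 * M))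
          have : (0:ℝ) < k.factorial := by positivity
          gcongr
          exact hnum k
        have := hS.mul_right |Real.Gamma β|⁻¹
        apply this.congr
        intro k
        field_simp
    · -- 0 < ρ
      apply aux_eventually_summable hterm_nonneg ?_ (Real.summable_pow_div_factorial (2 * M))
      filter_upwards [eventually_ge_atTop ⌈(2 - β) / ρ⌉₊] with k hk
      have hk' : (2 - β) / ρ ≤ (k : ℝ) := le_trans (Nat.le_ceil _) (by exact_mod_cast hk)
      have h2 : 2 ≤ ρ * k + β := by
        rw [div_le_iff₀ hpos] at hk'; linarith
      have hG : 1 ≤ Real.Gamma (ρ * k + β) := by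
        have := gamma_le_gamma (le_refl (2:ℝ)) h2
        rwa [Real.Gamma_two] at this
      have habs : |Real.Gamma (ρ * k + β)| = Real.Gamma (ρ * k + β) :=
        abs_of_pos (by linarith)
      rw [habs]
      have hfac : (0:ℝ) < k.factorial := by positivity
      calc ((k : ℝ) + 1) * M ^ k / (k.factorial * Real.Gamma (ρ * k + β))
          ≤ (2 * M) ^ k / (k.factorial * 1) := by
            apply div_le_div₀ (by positivity) (hnum k) (by positivity)
            exact mul_le_mul_of_nonneg_left hG hfac.le
        _ = (2 * M) ^ k / k.factorial := by rw [mul_one]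
  · -- ρ < 0
    set σ := -ρ with hσdef
    have hσ0 : 0 < σ := by simp only [hσdef]; linarith
    have hσ1 : σ < 1 := by simp only [hσdef]; linarith
    set c := 1 - β with hcdef
    set α := 1 - σ with hαdef
    have hα0 : 0 < α := by simp only [hαdef]; linarith
    set t := max 2 ((4 * M) ^ (α⁻¹ : ℝ)) with htdef
    have ht1 : (1:ℝ) ≤ t := le_trans one_le_two (le_max_left _ _)
    have ht0 : (0:ℝ) < t := by linarith
    have htα : 4 * M ≤ t ^ (α : ℝ) := by
      calc 4 * M = ((4 * M) ^ (α⁻¹ : ℝ)) ^ (α : ℝ) :=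
            (Real.rpow_inv_rpow (by positivity) (ne_of_gt hα0)).symm
        _ ≤ t ^ (α : ℝ) := Real.rpow_le_rpow (by positivity) (le_max_right _ _) hα0.le
    have htαpos : (0:ℝ) < t ^ (α : ℝ) := Real.rpow_pos_of_pos ht0 _
    apply aux_eventually_summable hterm_nonneg ?_
      (((summable_geometric_of_lt_one (by norm_num) (by norm_num : (1:ℝ)/2 < 1)).mul_left
        (Real.exp t * t ^ (c + 1 : ℝ))))
    filter_upwards [eventually_ge_atTop ⌈β / σ⌉₊, eventually_ge_atTop ⌈(2 - c) / σ⌉₊,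
      eventually_ge_atTop ⌈(c + 1) / α⌉₊] with k hk1 hk2 hk3
    have hk1' : β / σ ≤ (k : ℝ) := le_trans (Nat.le_ceil _) (by exact_mod_cast hk1)
    have hk2' : (2 - c) / σ ≤ (k : ℝ) := le_trans (Nat.le_ceil _) (by exact_mod_cast hk2)
    have hk3' : (c + 1) / α ≤ (k : ℝ) := le_trans (Nat.le_ceil _) (by exact_mod_cast hk3)
    have e1 : ρ * k + β ≤ 0 := by
      rw [div_le_iff₀ hσ0] at hk1'
      simp only [hσdef] at hk1'; nlinarith
    have e2 : 2 ≤ σ * k + c := by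
      rw [div_le_iff₀ hσ0] at hk2'; linarith
    have e3 : σ * k + c + 1 ≤ (k : ℝ) := by
      rw [div_le_iff₀ hα0] at hk3'
      simp only [hαdef] at hk3'; nlinarith
    set n := ⌈σ * (k : ℝ) + c⌉₊ with hndef
    have hn_lb : σ * (k : ℝ) + c ≤ n := Nat.le_ceil _
    have hn_ub : (n : ℝ) ≤ σ * k + c + 1 := (Nat.ceil_lt_add_one (by linarith)).le
    have hnk : n ≤ k := by
      have : (n : ℝ) ≤ (k : ℝ) := le_trans hn_ub e3
      exact_mod_cast this
    set d := k - n with hddef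
    have hd : (d : ℝ) = (k : ℝ) - (n : ℝ) := by
      simp only [hddef]; push_cast [Nat.cast_sub hnk]; ring
    have hd_lb : α * k - (c + 1) ≤ (d : ℝ) := by
      rw [hd]; simp only [hαdef]; nlinarith [hn_ub]
    -- the chain of inequalities
    have harg : 1 - (ρ * k + β) = σ * k + c := by
      simp only [hσdef, hcdef]; ring
    have hstepA : 1 / |Real.Gamma (ρ * k + β)| ≤ Real.Gamma (σ * k + c) := by
      have := one_div_abs_Gamma_le e1
      rwa [harg] at this
    have hstepB : Real.Gamma (σ * k + c) ≤ (n.factorial : ℝ) := by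
      have h1 : Real.Gamma (σ * k + c) ≤ Real.Gamma ((n : ℝ) + 1) :=
        gamma_le_gamma e2 (by linarith)
      rwa [Real.Gamma_nat_eq_factorial] at h1
    have hfac_ineq : (n.factorial : ℝ) * (d.factorial : ℝ) ≤ (k.factorial : ℝ) := by
      exact_mod_cast Nat.le_of_dvd k.factorial_pos
        (Nat.factorial_mul_factorial_dvd_factorial hnk)
    have hkfac : (0:ℝ) < k.factorial := by positivity
    have hdfac : (0:ℝ) < d.factorial := by positivity
    have hnfac : (0:ℝ) < n.factorial := by positivity
    have hGnonneg : (0:ℝ) ≤ |Real.Gamma (ρ * k + β)| := abs_nonneg _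
    -- term ≤ ((k+1)*M^k) * Γ(σk+c) / k!
    have key1 : ((k : ℝ) + 1) * M ^ k / (k.factorial * |Real.Gamma (ρ * k + β)|)
        ≤ ((k : ℝ) + 1) * M ^ k * Real.Gamma (σ * k + c) / k.factorial := by
      calc ((k : ℝ) + 1) * M ^ k / (k.factorial * |Real.Gamma (ρ * k + β)|)
          = (((k : ℝ) + 1) * M ^ k) * (1 / |Real.Gamma (ρ * k + β)|) / k.factorial := by
            ring
        _ ≤ (((k : ℝ) + 1) * M ^ k) * Real.Gamma (σ * k + c) / k.factorial := by
            apply div_le_div_nonneg_same _ hkfac.le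
            exact mul_le_mul_of_nonneg_left hstepA (by positivity)
    have key2 : ((k : ℝ) + 1) * M ^ k * Real.Gamma (σ * k + c) / k.factorial
        ≤ (2 * M) ^ k / d.factorial := by
      have hΓ0 : 0 ≤ Real.Gamma (σ * k + c) :=
        (Real.Gamma_pos_of_pos (by linarith)).le
      have h1 : ((k : ℝ) + 1) * M ^ k * Real.Gamma (σ * k + c)
          ≤ (2 * M) ^ k * (n.factorial : ℝ) := by
        apply mul_le_mul (hnum k) hstepB hΓ0 (by positivity)
      calc ((k : ℝ) + 1) * M ^ k * Real.Gamma (σ * k + c) / k.factorial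
          ≤ (2 * M) ^ k * (n.factorial : ℝ) / k.factorial := by gcongr
        _ ≤ (2 * M) ^ k / d.factorial := by
            rw [div_le_div_iff₀ hkfac hdfac]
            calc (2 * M) ^ k * (n.factorial : ℝ) * (d.factorial : ℝ)
                = (2 * M) ^ k * ((n.factorial : ℝ) * (d.factorial : ℝ)) := by ring
              _ ≤ (2 * M) ^ k * (k.factorial : ℝ) := by
                  apply mul_le_mul_of_nonneg_left hfac_ineq (by positivity)
    have key3 : (2 * M) ^ k / (d.factorial : ℝ)
        ≤ Real.exp t * t ^ (c + 1 : ℝ) * (1 / 2) ^ k := by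
      have hfd : (1 : ℝ) / d.factorial ≤ Real.exp t / t ^ ((d : ℝ)) := by
        have h1 : t ^ (d : ℕ) / (d.factorial : ℝ) ≤ Real.exp t :=
          Real.pow_div_factorial_le_exp t ht0.le d
        have htd : (0:ℝ) < t ^ (d : ℕ) := pow_pos ht0 d
        have h2 : (1 : ℝ) / d.factorial ≤ Real.exp t / t ^ (d : ℕ) := by
          rw [div_le_div_iff₀ hdfac htd, one_mul]
          rw [div_le_iff₀ hdfac] at h1
          linarith
        rwa [← Real.rpow_natCast t d] at h2
      have hexp : t ^ (α * k - (c + 1) : ℝ) ≤ t ^ ((d : ℝ)) :=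
        Real.rpow_le_rpow_of_exponent_le ht1 hd_lb
      have htexp_pos : (0:ℝ) < t ^ (α * k - (c + 1) : ℝ) := Real.rpow_pos_of_pos ht0 _
      have hfd2 : (1 : ℝ) / d.factorial ≤ Real.exp t / t ^ (α * k - (c + 1) : ℝ) := by
        apply le_trans hfd
        apply div_le_div₀ (Real.exp_pos t).le le_rfl htexp_pos hexp
      have heq : Real.exp t / t ^ (α * k - (c + 1) : ℝ)
          = Real.exp t * t ^ (c + 1 : ℝ) / (t ^ (α : ℝ)) ^ k := by
        rw [Real.rpow_sub ht0, ← Real.rpow_natCast (t ^ (α:ℝ)) k, ← Real.rpow_mul ht0.le]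
        rw [div_div_eq_mul_div]
      have hratio : (2 * M) / t ^ (α : ℝ) ≤ 1 / 2 := by
        rw [div_le_div_iff₀ htαpos (by norm_num : (0:ℝ) < 2)]
        linarith
      calc (2 * M) ^ k / (d.factorial : ℝ)
          = (2 * M) ^ k * (1 / d.factorial) := by ring
        _ ≤ (2 * M) ^ k * (Real.exp t / t ^ (α * k - (c + 1) : ℝ)) := by
            apply mul_le_mul_of_nonneg_left hfd2 (by positivity)
        _ = Real.exp t * t ^ (c + 1 : ℝ) * ((2 * M) ^ k / (t ^ (α : ℝ)) ^ k) := by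
            rw [heq]; ring
        _ = Real.exp t * t ^ (c + 1 : ℝ) * ((2 * M) / t ^ (α : ℝ)) ^ k := by
            rw [div_pow]
        _ ≤ Real.exp t * t ^ (c + 1 : ℝ) * (1 / 2) ^ k := by
            apply mul_le_mul_of_nonneg_left _ (by positivity)
            exact pow_le_pow_left₀ (by positivity) hratio k
    exact le_trans key1 (le_trans key2 key3)

/-- The Wright function `W(z; ρ; β) = Σ_{k≥0} z^k/(k! Γ(ρk+β))`. -/
noncomputable def wright (z ρ β : ℝ) : ℝ :=
  ∑' k : ℕ, z ^ k / (k.factorial * Real.Gamma (ρ * k + β))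

/-- `∂/∂z W(z,ρ,β) = W(z,ρ,ρ+β)` for all real `z`, `ρ > -1`, `β ∈ ℝ`. -/
theorem wright_hasDerivAt (ρ β : ℝ) (hρ : -1 < ρ) (z : ℝ) :
    HasDerivAt (fun w => wright w ρ β) (wright z ρ (ρ + β)) z := by
  set M : ℝ := |z| + 2 with hMdef
  have hM : 1 ≤ M := by
    have := abs_nonneg z; simp only [hMdef]; linarith
  have hM0 : 0 < M := lt_of_lt_of_le one_pos hM
  set u : ℕ → ℝ := fun k =>
    ((k : ℝ) + 1) * M ^ k / (k.factorial * |Real.Gamma (ρ * k + β)|) with hudef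
  have hu : Summable u := wright_summable_aux ρ β M hρ hM
  set g : ℕ → ℝ → ℝ := fun k w => w ^ k / (k.factorial * Real.Gamma (ρ * k + β)) with hgdef
  set g' : ℕ → ℝ → ℝ := fun k w =>
    ((k : ℝ) * w ^ (k - 1)) / (k.factorial * Real.Gamma (ρ * k + β)) with hg'def
  have hderiv : ∀ (k : ℕ) (y : ℝ), y ∈ Metric.ball z 1 → HasDerivAt (g k) (g' k y) y := by
    intro k y _
    exact (hasDerivAt_pow k y).div_const _
  have habs_denom : ∀ k : ℕ, |(k.factorial : ℝ) * Real.Gamma (ρ * k + β)|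
      = (k.factorial : ℝ) * |Real.Gamma (ρ * k + β)| := by
    intro k
    rw [abs_mul, Nat.abs_cast]
  have hbound : ∀ (k : ℕ) (y : ℝ), y ∈ Metric.ball z 1 → ‖g' k y‖ ≤ u k := by
    intro k y hy
    have hyM : |y| ≤ M := by
      have h1 : |y - z| < 1 := by simpa [Real.dist_eq] using hy
      have := abs_sub_abs_le_abs_sub y z
      simp only [hMdef]; linarith
    simp only [hg'def, hudef, Real.norm_eq_abs, abs_div, habs_denom, abs_mul, abs_pow,
      Nat.abs_cast]
    apply div_le_div_nonneg_same
    · have h1 : |y| ^ (k - 1) ≤ M ^ (k - 1) := pow_le_pow_left₀ (abs_nonneg y) hyM _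
      have h2 : M ^ (k - 1) ≤ M ^ k := pow_le_pow_right₀ hM (Nat.sub_le k 1)
      have h3 : (k : ℝ) ≤ (k : ℝ) + 1 := by linarith
      calc (k : ℝ) * |y| ^ (k - 1) ≤ (k : ℝ) * M ^ k := by
            apply mul_le_mul_of_nonneg_left (le_trans h1 h2) (Nat.cast_nonneg k)
        _ ≤ ((k : ℝ) + 1) * M ^ k := by
            apply mul_le_mul_of_nonneg_right h3 (by positivity)
    · positivity
  have hg0 : Summable fun k => g k z := by
    apply Summable.of_norm_bounded hu
    intro k
    simp only [hgdef, hudef, Real.norm_eq_abs, abs_div, habs_denom, abs_pow]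
    apply div_le_div_nonneg_same
    · have h1 : |z| ^ k ≤ M ^ k := pow_le_pow_left₀ (abs_nonneg z) (by simp only [hMdef]; linarith) _
      calc |z| ^ k ≤ M ^ k := h1
        _ ≤ ((k : ℝ) + 1) * M ^ k := le_mul_of_one_le_left (by positivity) (by have := Nat.cast_nonneg (α := ℝ) k; linarith)
    · positivity
  have key := hasDerivAt_tsum_of_isPreconnected hu Metric.isOpen_ball
    (convex_ball z (1:ℝ)).isPreconnected hderiv hbound (Metric.mem_ball_self one_pos) hg0
    (Metric.mem_ball_self one_pos)
  have hsummable' : Summable fun k => g' k z :=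
    Summable.of_norm_bounded hu (fun k => hbound k z (Metric.mem_ball_self one_pos))
  have hfinal : (∑' k, g' k z) = wright z ρ (ρ + β) := by
    rw [hsummable'.tsum_eq_zero_add]
    have h0 : g' 0 z = 0 := by simp [hg'def]
    rw [h0, zero_add, wright]
    apply tsum_congr
    intro k
    simp only [hg'def, Nat.add_sub_cancel]
    push_cast [Nat.factorial_succ]
    rw [show ρ * ((k:ℝ) + 1) + β = ρ * (k:ℝ) + (ρ + β) by ring]
    rw [mul_assoc, mul_div_mul_left _ _ (by positivity : (0:ℝ) < (k:ℝ) + 1).ne']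
  rw [← hfinal]
  exact key
end

section
/- For all real x ≥ 0, erfc(x) = W(-2x, -1/2, 1), where erfc(x) = (2/√π) ∫_x^∞ e^{-ξ²} dξ, equivalently erf(x) = 1 − W(-2x, -1/2, 1). -/
open MeasureTheory

lemma gamma_half_sub (m : ℕ) :
    Real.Gamma (1 / 2 - m) =
      (-4 : ℝ) ^ m * m.factorial * Real.sqrt Real.pi / (2 * m).factorial := by
  induction m with
  | zero => simp [Real.Gamma_one_half_eq]; norm_num [Real.Gamma_one_half_eq]
  | succ m ih =>
    have hm0 : (0:ℝ) ≤ (m:ℝ) := Nat.cast_nonneg m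
    have hs : (1 / 2 - ((m + 1 : ℕ) : ℝ)) ≠ 0 := by push_cast; intro h; linarith
    have h1 : (1 / 2 - ((m + 1 : ℕ) : ℝ)) + 1 = 1 / 2 - m := by push_cast; ring
    have h2 := Real.Gamma_add_one hs
    rw [h1, ih] at h2
    have hG : Real.Gamma (1 / 2 - ((m + 1 : ℕ) : ℝ)) =
        ((-4 : ℝ) ^ m * m.factorial * Real.sqrt Real.pi / (2 * m).factorial) /
          (1 / 2 - ((m + 1 : ℕ) : ℝ)) := by
      rw [h2, mul_div_cancel_left₀ _ hs]
    rw [hG]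
    have hf1 : (((m + 1).factorial : ℝ)) = (m + 1) * m.factorial := by
      exact_mod_cast Nat.factorial_succ m
    have hf2 : (((2 * (m + 1)).factorial : ℝ)) = (2 * m + 2) * ((2 * m + 1) * (2 * m).factorial) := by
      have h : 2 * (m + 1) = (2 * m + 1) + 1 := by ring
      rw [h, Nat.factorial_succ, Nat.factorial_succ]; push_cast; ring
    have hfz : ((2 * m).factorial : ℝ) ≠ 0 := Nat.cast_ne_zero.mpr (Nat.factorial_ne_zero _)
    rw [hf1, hf2, div_div, div_eq_div_iff (mul_ne_zero hfz hs) (by positivity)]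
    push_cast
    ring

lemma odd_term (x : ℝ) (m : ℕ) :
    (-(2 * x)) ^ (2 * m + 1) /
        ((2 * m + 1).factorial * Real.Gamma (-(1 / 2) * (2 * m + 1 : ℕ) + 1)) =
      -(2 / Real.sqrt Real.pi) * ((-1) ^ m * x ^ (2 * m + 1) / (m.factorial * (2 * m + 1))) := by
  have harg : (-(1 / 2) * ((2 * m + 1 : ℕ) : ℝ) + 1) = 1 / 2 - m := by push_cast; ring
  rw [harg, gamma_half_sub]
  have hfact : ((2 * m + 1).factorial : ℝ) = (2 * m + 1) * (2 * m).factorial := by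
    exact_mod_cast Nat.factorial_succ (2 * m)
  have h2 : (-(2 * x)) ^ (2 * m + 1) = -(2 * (4 : ℝ) ^ m * x ^ (2 * m + 1)) := by
    rw [neg_pow]
    have ho : (-1 : ℝ) ^ (2 * m + 1) = -1 := Odd.neg_one_pow ⟨m, by ring⟩
    rw [ho, mul_pow]
    have h4 : (2 : ℝ) ^ (2 * m + 1) = 2 * 4 ^ m := by
      rw [pow_succ, pow_mul]; norm_num; ring
    rw [h4]; ring
  have h5 : ((-4 : ℝ)) ^ m = (-1) ^ m * 4 ^ m := by rw [← neg_one_mul, mul_pow]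
  rw [hfact, h2, h5]
  have hsp : Real.sqrt Real.pi ≠ 0 := ne_of_gt (Real.sqrt_pos.mpr Real.pi_pos)
  have hmf : ((m.factorial : ℝ)) ≠ 0 := Nat.cast_ne_zero.mpr (Nat.factorial_ne_zero _)
  have h2mf : (((2 * m).factorial : ℝ)) ≠ 0 := Nat.cast_ne_zero.mpr (Nat.factorial_ne_zero _)
  have h2m1 : ((2 * m + 1 : ℕ) : ℝ) ≠ 0 := by positivity
  have h4m : (4 : ℝ) ^ m ≠ 0 := by positivity
  rcases Nat.even_or_odd m with hm | hm
  · rw [hm.neg_one_pow]; push_cast; field_simp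
  · rw [hm.neg_one_pow]; push_cast; field_simp

lemma hasSum_int (x : ℝ) (hx : 0 ≤ x) :
    HasSum (fun m : ℕ => (-1) ^ m * x ^ (2 * m + 1) / (m.factorial * (2 * m + 1)))
      (∫ ξ in (0:ℝ)..x, Real.exp (-ξ ^ 2)) := by
  set μ := volume.restrict (Set.Ioc (0:ℝ) x) with hμ
  set F : ℕ → ℝ → ℝ := fun m ξ => (-1) ^ m * ξ ^ (2 * m) / m.factorial with hF
  have hcont : ∀ m, Continuous (F m) := by intro m; fun_prop
  have hF_int : ∀ m, Integrable (F m) μ := fun m => (hcont m).integrableOn_Ioc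
  have hval : ∀ m : ℕ, ∫ ξ in (0:ℝ)..x, F m ξ = (-1) ^ m * x ^ (2 * m + 1) / (m.factorial * (2 * m + 1)) := by
    intro m
    have : ∀ ξ : ℝ, F m ξ = ((-1) ^ m / m.factorial) * ξ ^ (2 * m) := by
      intro ξ; simp only [hF]; ring
    rw [intervalIntegral.integral_congr (fun ξ _ => this ξ),
      intervalIntegral.integral_const_mul, integral_pow]
    rw [zero_pow (by omega)]
    push_cast
    field_simp
    simp
  have key : ∀ m : ℕ, ∫ ξ, F m ξ ∂μ = (-1) ^ m * x ^ (2 * m + 1) / (m.factorial * (2 * m + 1)) := by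
    intro m
    rw [← hval m, intervalIntegral.integral_of_le hx, hμ]
  have hnormval : ∀ m : ℕ, ∫ ξ, ‖F m ξ‖ ∂μ = x ^ (2 * m + 1) / (m.factorial * (2 * m + 1)) := by
    intro m
    have hn : ∀ ξ : ℝ, ‖F m ξ‖ = (1 / m.factorial) * ξ ^ (2 * m) := by
      intro ξ
      have hev : (0:ℝ) ≤ ξ ^ (2 * m) := by rw [pow_mul]; positivity
      rw [Real.norm_eq_abs, hF]
      simp only
      rw [abs_div, abs_mul, abs_pow, abs_neg, abs_one, one_pow, one_mul,
        abs_of_nonneg hev, Nat.abs_cast]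
      ring
    rw [hμ, ← intervalIntegral.integral_of_le hx,
      intervalIntegral.integral_congr (fun ξ _ => hn ξ),
      intervalIntegral.integral_const_mul, integral_pow, zero_pow (by omega)]
    push_cast
    field_simp
    simp
  have hF_sum : Summable fun m => ∫ ξ, ‖F m ξ‖ ∂μ := by
    have hb : Summable (fun m : ℕ => x * ((x ^ 2) ^ m / m.factorial)) :=
      (Real.summable_pow_div_factorial (x ^ 2)).mul_left x
    apply Summable.of_nonneg_of_le ?_ ?_ hb
    · intro m; rw [hnormval m]; positivity
    · intro m
      rw [hnormval m]
      have hxp : x ^ (2 * m + 1) = x * (x ^ 2) ^ m := by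
        rw [pow_succ, pow_mul]; ring
      rw [hxp, mul_div_assoc]
      gcongr
      nlinarith [Nat.cast_nonneg (α := ℝ) m, Nat.cast_pos (α := ℝ) |>.mpr (Nat.factorial_pos m)]
  have hexp : ∀ ξ : ℝ, HasSum (fun m => F m ξ) (Real.exp (-ξ ^ 2)) := by
    intro ξ
    have h := NormedSpace.expSeries_div_hasSum_exp (-ξ ^ 2)
    rw [← Real.exp_eq_exp_ℝ] at h
    convert! h using 2 with m
    rw [hF]
    simp only
    rw [neg_pow, pow_mul]
    ring
  have H := MeasureTheory.hasSum_integral_of_summable_integral_norm hF_int hF_sum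
  have ht : (fun ξ => ∑' m, F m ξ) = fun ξ => Real.exp (-ξ ^ 2) :=
    funext fun ξ => (hexp ξ).tsum_eq
  simp only [key] at H
  rw [ht] at H  -- may need simp_rw
  rwa [hμ, ← intervalIntegral.integral_of_le hx] at H

/-- The error function `erf(x) = (2/√π) ∫_0^x e^{-ξ²} dξ`. -/
noncomputable def erf (x : ℝ) : ℝ :=
  2 / Real.sqrt Real.pi * ∫ ξ in (0 : ℝ)..x, Real.exp (-ξ ^ 2)

/-- The complementary error function `erfc(x) = (2/√π) ∫_x^∞ e^{-ξ²} dξ`. -/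
noncomputable def erfc (x : ℝ) : ℝ :=
  2 / Real.sqrt Real.pi * ∫ ξ in Set.Ioi x, Real.exp (-ξ ^ 2)

/-- For `x ≥ 0`, `erfc(x) = W(-2x, -1/2, 1)`, equivalently
`erf(x) = 1 - W(-2x, -1/2, 1)`. -/
theorem erfc_eq_wright (x : ℝ) (hx : 0 ≤ x) :
    erfc x = wright (-(2 * x)) (-(1 / 2)) 1 ∧
      erf x = 1 - wright (-(2 * x)) (-(1 / 2)) 1 := by
  set f : ℕ → ℝ := fun k =>
    (-(2 * x)) ^ k / (k.factorial * Real.Gamma (-(1 / 2) * k + 1)) with hf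
  -- even part sums to 1
  have he : HasSum (fun m : ℕ => f (2 * m)) 1 := by
    have h0 : f (2 * 0) = 1 := by
      simp [hf, Real.Gamma_one]
    have hz : ∀ m : ℕ, m ≠ 0 → f (2 * m) = 0 := by
      intro m hm
      obtain ⟨n, rfl⟩ := Nat.exists_eq_succ_of_ne_zero hm
      have harg : (-(1 / 2) * ((2 * (n + 1) : ℕ) : ℝ) + 1) = -(n : ℝ) := by
        push_cast; ring
      rw [hf]
      simp only
      rw [harg, Real.Gamma_neg_nat_eq_zero, mul_zero, div_zero]
    have := hasSum_single (f := fun m : ℕ => f (2 * m)) 0 (fun m hm => hz m hm)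
    have h00 : f 0 = 1 := by simpa using h0
    simpa [h00] using this
  -- odd part sums to -(erf x)
  have ho : HasSum (fun m : ℕ => f (2 * m + 1)) (-(erf x)) := by
    have heq : (fun m : ℕ => f (2 * m + 1)) = fun m : ℕ =>
        -(2 / Real.sqrt Real.pi) *
          ((-1) ^ m * x ^ (2 * m + 1) / (m.factorial * (2 * m + 1))) := by
      funext m
      rw [hf]
      exact odd_term x m
    rw [heq]
    have := (hasSum_int x hx).mul_left (-(2 / Real.sqrt Real.pi))
    convert! this using 1
    rw [erf]
    ring
  have hW : HasSum f (1 + -(erf x)) := he.even_add_odd ho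
  have hWeq : wright (-(2 * x)) (-(1 / 2)) 1 = 1 - erf x := by
    rw [wright]
    have : f = fun k : ℕ =>
        (-(2 * x)) ^ k / (k.factorial * Real.Gamma (-(1 / 2) * k + 1)) := hf
    rw [← this, hW.tsum_eq]
    ring
  -- erfc = 1 - erf
  have hint : Integrable (fun ξ : ℝ => Real.exp (-ξ ^ 2)) := by
    simpa using integrable_exp_neg_mul_sq (one_pos)
  have hsplit : ∫ ξ in Set.Ioi (0:ℝ), Real.exp (-ξ ^ 2) =
      (∫ ξ in Set.Ioc 0 x, Real.exp (-ξ ^ 2)) + ∫ ξ in Set.Ioi x, Real.exp (-ξ ^ 2) := by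
    rw [← Set.Ioc_union_Ioi_eq_Ioi hx]
    exact MeasureTheory.setIntegral_union (Set.Ioc_disjoint_Ioi le_rfl)
      measurableSet_Ioi hint.integrableOn hint.integrableOn
  have hgauss : ∫ ξ in Set.Ioi (0:ℝ), Real.exp (-ξ ^ 2) = Real.sqrt Real.pi / 2 := by
    have := integral_gaussian_Ioi 1
    simpa using this
  have herfc : erfc x = 1 - erf x := by
    rw [erfc, erf]
    rw [intervalIntegral.integral_of_le hx]
    have h1 : ∫ ξ in Set.Ioi x, Real.exp (-ξ ^ 2) =
        Real.sqrt Real.pi / 2 - ∫ ξ in Set.Ioc 0 x, Real.exp (-ξ ^ 2) := by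
      rw [← hgauss, hsplit]; ring
    rw [h1]
    have hsp : Real.sqrt Real.pi ≠ 0 := ne_of_gt (Real.sqrt_pos.mpr Real.pi_pos)
    field_simp
  exact ⟨by rw [herfc, hWeq], by rw [hWeq]; ring⟩
end

section
/- For every fixed x ≥ 0, lim_{α→1⁻} [1 − W(-2x, -α/2, 1)] = erf(x). -/
open Filter MeasureTheory

open Real


lemma contGammaInv : Continuous fun x : ℝ => (Real.Gamma x)⁻¹ := by
  have h : (fun x : ℝ => (Real.Gamma x)⁻¹) = fun x : ℝ => ((Complex.Gamma x)⁻¹).re := by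
    funext x
    rw [Complex.Gamma_ofReal, ← Complex.ofReal_inv, Complex.ofReal_re]
  rw [h]
  exact Complex.continuous_re.comp
    ((Complex.differentiable_one_div_Gamma.continuous).comp Complex.continuous_ofReal)

lemma GammaInv_one_sub {s : ℝ} (hs : 0 < s) :
    (Real.Gamma (1 - s))⁻¹ = Real.Gamma s * Real.sin (π * s) / π := by
  rcases eq_or_ne (Real.sin (π * s)) 0 with h | h
  · obtain ⟨n, hn⟩ := Real.sin_eq_zero_iff.mp h
    have hsn : s = (n : ℝ) := by
      have h2 : π * s = π * (n : ℝ) := by rw [← hn]; ring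
      exact mul_left_cancel₀ Real.pi_ne_zero h2
    have hn0 : 0 < n := by exact_mod_cast hsn ▸ hs
    set m : ℕ := (n - 1).toNat with hm
    have hms : (1 : ℝ) - s = -(m : ℝ) := by
      have : ((m : ℤ) : ℝ) = (n : ℝ) - 1 := by
        rw [hm, Int.toNat_of_nonneg (by omega)]; push_cast; ring
      rw [hsn]; push_cast at this ⊢; linarith
    rw [hms, Real.Gamma_neg_nat_eq_zero, inv_zero, h, mul_zero, zero_div]
  · have key := Real.Gamma_mul_Gamma_one_sub s
    rw [eq_div_iff h] at key
    have h1 : Real.Gamma (1 - s) ≠ 0 := by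
      intro h0
      rw [h0, mul_zero, zero_mul] at key
      exact Real.pi_ne_zero key.symm
    field_simp
    rw [mul_comm π s] at key
    linear_combination -key

lemma Gamma_le_max {a b s : ℝ} (ha : 0 < a) (h1 : a ≤ s) (h2 : s ≤ b) :
    Real.Gamma s ≤ max (Real.Gamma a) (Real.Gamma b) := by
  have hb : 0 < b := lt_of_lt_of_le ha (h1.trans h2)
  refine Real.convexOn_Gamma.le_on_segment (Set.mem_Ioi.mpr ha) (Set.mem_Ioi.mpr hb) ?_
  rw [segment_eq_Icc (h1.trans h2)]; exact ⟨h1, h2⟩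

lemma Gamma_nat_add_half (m : ℕ) :
    Real.Gamma ((m : ℝ) + 1 / 2) = Real.sqrt π * (2 * m).factorial / (4 ^ m * m.factorial) := by
  induction m with
  | zero => rw [show ((0:ℕ):ℝ) + 1/2 = 1/2 by norm_num, Real.Gamma_one_half_eq]; simp
  | succ n ih =>
      have h1 : ((n + 1 : ℕ) : ℝ) + 1 / 2 = ((n : ℝ) + 1 / 2) + 1 := by push_cast; ring
      have hpos : ((n : ℝ) + 1 / 2) ≠ 0 := by positivity
      rw [h1, Real.Gamma_add_one hpos, ih]
      have h2 : 2 * (n + 1) = (2 * n + 1) + 1 := by ring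
      rw [h2, Nat.factorial_succ, Nat.factorial_succ, Nat.factorial_succ]
      have hf : ((n.factorial : ℝ)) ≠ 0 := by exact_mod_cast n.factorial_ne_zero
      push_cast
      field_simp
      ring

lemma GammaInv_half_sub (m : ℕ) :
    (Real.Gamma (1 - ((m : ℝ) + 1 / 2)))⁻¹ =
      (-1) ^ m * (2 * m).factorial / (4 ^ m * m.factorial * Real.sqrt π) := by
  have hsin : Real.sin (π * ((m : ℝ) + 1 / 2)) = (-1) ^ m := by
    have h : π * ((m : ℝ) + 1 / 2) = π / 2 + (m : ℕ) * π := by push_cast; ring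
    rw [h, Real.sin_add_nat_mul_pi, Real.sin_pi_div_two, mul_one]
  rw [GammaInv_one_sub (by positivity), hsin, _root_.Gamma_nat_add_half]
  have h4 : (4 : ℝ) ^ m ≠ 0 := by positivity
  have hf : ((m.factorial : ℝ)) ≠ 0 := by exact_mod_cast m.factorial_ne_zero
  have hsq : Real.sqrt π * Real.sqrt π = π := Real.mul_self_sqrt Real.pi_pos.le
  have hs0 : Real.sqrt π ≠ 0 := by positivity
  field_simp
  linear_combination hsq

lemma integral_exp_neg_sq_eq (x : ℝ) :
    (∫ ξ in (0:ℝ)..x, Real.exp (-ξ ^ 2)) =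
      ∑' m : ℕ, (-1) ^ m * x ^ (2 * m + 1) / (m.factorial * (2 * m + 1)) := by
  set F : ℝ → ℝ := fun y => ∑' m : ℕ, (-1) ^ m * y ^ (2 * m + 1) / (m.factorial * (2 * m + 1))
    with hF
  set R : ℝ := |x| + 1 with hR
  have hR0 : (0 : ℝ) < R := by positivity
  have hderiv : ∀ t ∈ Set.Ioo (-R) R, HasDerivAt F (Real.exp (-t ^ 2)) t := by
    intro t ht
    have h := hasDerivAt_tsum_of_isPreconnected
      (u := fun m : ℕ => (R ^ 2) ^ m / m.factorial)
      (g := fun (m : ℕ) (y : ℝ) => (-1) ^ m * y ^ (2 * m + 1) / (m.factorial * (2 * m + 1)))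
      (g' := fun (m : ℕ) (y : ℝ) => (-1) ^ m * y ^ (2 * m) / m.factorial)
      (t := Set.Ioo (-R) R) (y₀ := 0) (y := t)
      (Real.summable_pow_div_factorial _) isOpen_Ioo (convex_Ioo _ _).isPreconnected
      ?_ ?_ ?_ ?_ ht
    · convert h using 1
      · rfl
      · rfl
      rw [Real.exp_eq_exp_ℝ, NormedSpace.exp_eq_tsum_div]
      refine tsum_congr fun m => ?_
      rw [neg_pow, ← pow_mul, mul_div_assoc]
    · intro m y _
      have h1 := (hasDerivAt_pow (2 * m + 1) y).const_mul
        ((-1 : ℝ) ^ m / ((m.factorial : ℝ) * (2 * m + 1)))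
      convert h1 using 1
      · rfl
      · funext z; ring
      · have hf : ((m.factorial : ℝ)) ≠ 0 := by exact_mod_cast m.factorial_ne_zero
        have h21 : ((2 * m + 1 : ℕ) : ℝ) = 2 * (m : ℝ) + 1 := by push_cast; ring
        simp only [h21, Nat.add_sub_cancel]
        field_simp
    · intro m y hy
      have hy' : |y| ≤ R := by
        rcases ht with _; rcases hy with ⟨h1, h2⟩
        rw [abs_le]; constructor <;> linarith
      have : ‖(-1 : ℝ) ^ m * y ^ (2 * m) / m.factorial‖ = |y| ^ (2 * m) / m.factorial := by
        rw [Real.norm_eq_abs, abs_div, abs_mul, abs_pow, abs_pow, abs_neg, abs_one, one_pow,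
          one_mul, Nat.abs_cast]
      rw [this]
      simp only [← pow_mul]
      gcongr
    · exact ⟨by linarith, by linarith⟩
    · have : (fun m : ℕ => (-1 : ℝ) ^ m * (0:ℝ) ^ (2 * m + 1) / (m.factorial * (2 * m + 1)))
          = fun _ => (0 : ℝ) := by
        funext m; simp
      rw [this]; exact summable_zero
  have hsub : Set.uIcc 0 x ⊆ Set.Ioo (-R) R := by
    intro t ht
    rw [Set.mem_uIcc] at ht
    have h1 := le_abs_self x
    have h2 := neg_abs_le x
    constructor
    · rcases ht with ⟨ha, hb⟩ | ⟨ha, hb⟩ <;> simp only [hR] <;> linarith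
    · rcases ht with ⟨ha, hb⟩ | ⟨ha, hb⟩ <;> simp only [hR] <;> linarith
  have hcont : IntervalIntegrable (fun t : ℝ => Real.exp (-t ^ 2)) MeasureTheory.volume 0 x :=
    (Real.continuous_exp.comp (by continuity)).intervalIntegrable 0 x
  have hFTC := intervalIntegral.integral_eq_sub_of_hasDerivAt
    (fun t ht => hderiv t (hsub ht)) hcont
  rw [hFTC]
  have hF0 : F 0 = 0 := by
    have : F 0 = ∑' _ : ℕ, (0 : ℝ) := tsum_congr fun m => by simp [hF]
    rw [this, tsum_zero]
  rw [hF0, sub_zero]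

lemma wright_one_val (x : ℝ) (hx : 0 ≤ x) :
    1 - (∑' k : ℕ, (-(2 * x)) ^ k / (k.factorial * Real.Gamma (-(1/2 : ℝ) * k + 1)))
      = 2 / Real.sqrt π * ∑' m : ℕ, (-1) ^ m * x ^ (2 * m + 1) / (m.factorial * (2 * m + 1)) := by
  set g : ℕ → ℝ := fun k => (-(2 * x)) ^ k / (k.factorial * Real.Gamma (-(1/2 : ℝ) * k + 1))
    with hg
  have heven : (fun m : ℕ => g (2 * m)) = fun m => if m = 0 then (1 : ℝ) else 0 := by
    funext m
    cases m with
    | zero => simp [hg, Real.Gamma_one]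
    | succ n =>
        have harg : -(1/2 : ℝ) * ((2 * (n + 1) : ℕ) : ℝ) + 1 = -(n : ℝ) := by push_cast; ring
        simp only [hg, harg, Real.Gamma_neg_nat_eq_zero, mul_zero, div_zero, if_neg
          (Nat.succ_ne_zero n)]
  have hodd : (fun m : ℕ => g (2 * m + 1)) = fun m : ℕ =>
      -(2 / Real.sqrt π * ((-1) ^ m * x ^ (2 * m + 1) / (m.factorial * (2 * m + 1)))) := by
    funext m
    have harg : -(1/2 : ℝ) * ((2 * m + 1 : ℕ) : ℝ) + 1 = 1 - ((m : ℝ) + 1/2) := by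
      push_cast; ring
    have hneg : (-(2 * x)) ^ (2 * m + 1) = -((2 * x) ^ (2 * m + 1)) :=
      Odd.neg_pow ⟨m, by ring⟩ _
    have hfact : (((2 * m + 1).factorial : ℕ) : ℝ) = (2 * (m:ℝ) + 1) * (((2 * m).factorial : ℕ) : ℝ) := by
      rw [Nat.factorial_succ]; push_cast; ring
    simp only [hg, harg]
    rw [div_eq_mul_inv, mul_inv, GammaInv_half_sub, hneg, hfact]
    have h2 : (2 * x) ^ (2 * m + 1) = 2 * 4 ^ m * x ^ (2 * m + 1) := by
      have h22 : (2:ℝ) ^ (2 * m + 1) = 2 * 4 ^ m := by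
        rw [pow_succ, pow_mul]; norm_num [mul_comm]
      rw [mul_pow, h22]
    rw [h2]
    have hf : ((m.factorial : ℝ)) ≠ 0 := by exact_mod_cast m.factorial_ne_zero
    have h2m : (((2 * m).factorial : ℝ)) ≠ 0 := by exact_mod_cast (2 * m).factorial_ne_zero
    have h21 : (2 * (m : ℝ) + 1) ≠ 0 := by positivity
    have h4 : (4 : ℝ) ^ m ≠ 0 := by positivity
    have hs0 : Real.sqrt π ≠ 0 := by positivity
    field_simp
  have hsum_even : Summable (fun m : ℕ => g (2 * m)) := by
    rw [heven]; exact ⟨1, hasSum_ite_eq 0 1⟩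
  have hsum_odd0 : Summable (fun m : ℕ =>
      (-1 : ℝ) ^ m * x ^ (2 * m + 1) / (m.factorial * (2 * m + 1))) := by
    apply Summable.of_norm_bounded ((Real.summable_pow_div_factorial (x ^ 2)).mul_left x)
    intro m
    have hfp : (0 : ℝ) < m.factorial := by exact_mod_cast m.factorial_pos
    have h1 : ‖(-1 : ℝ) ^ m * x ^ (2 * m + 1) / (m.factorial * (2 * m + 1))‖
        = x ^ (2 * m + 1) / (m.factorial * (2 * m + 1)) := by
      rw [Real.norm_eq_abs, abs_div, abs_mul, abs_pow, abs_neg, abs_one, one_pow, one_mul,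
        abs_pow, abs_of_nonneg hx, abs_of_nonneg (by positivity : (0:ℝ) ≤ (m.factorial : ℝ) * (2 * m + 1))]
    rw [h1]
    have h2 : x * ((x ^ 2) ^ m / m.factorial) = x ^ (2 * m + 1) / (m.factorial : ℝ) := by
      rw [← pow_mul, mul_comm 2 m, pow_succ']
      ring
    rw [h2]
    gcongr
    nlinarith [hfp]
  have hsum_odd : Summable (fun m : ℕ => g (2 * m + 1)) := by
    rw [hodd]
    exact (hsum_odd0.mul_left (2 / Real.sqrt π)).neg
  have hts := (tsum_even_add_odd hsum_even hsum_odd).symm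
  rw [hts, heven, hodd, tsum_ite_eq, tsum_neg, tsum_mul_left]
  ring

lemma summable_bound (x : ℝ) (hx : 0 ≤ x) :
    Summable (fun k : ℕ =>
      (2 * x) ^ k * (Real.Gamma (1/4) + 1 + Real.Gamma ((k : ℝ) / 2 + 1)) / k.factorial) := by
  have hsplit : (fun k : ℕ =>
      (2 * x) ^ k * (Real.Gamma (1/4) + 1 + Real.Gamma ((k : ℝ) / 2 + 1)) / k.factorial)
      = fun k : ℕ => ((2 * x) ^ k / k.factorial * (Real.Gamma (1/4) + 1)
        + (2 * x) ^ k * Real.Gamma ((k : ℝ) / 2 + 1) / k.factorial) := by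
    funext k; ring
  rw [hsplit]
  refine Summable.add ((Real.summable_pow_div_factorial (2 * x)).mul_right _) ?_
  apply Summable.even_add_odd
  · -- even part
    apply Summable.of_nonneg_of_le ?_ ?_ (Real.summable_pow_div_factorial (4 * x ^ 2))
    · intro m
      have := Real.Gamma_nonneg_of_nonneg (by positivity : (0:ℝ) ≤ ((2*m : ℕ) : ℝ) / 2 + 1)
      positivity
    · intro m
      have hG : Real.Gamma (((2 * m : ℕ) : ℝ) / 2 + 1) = m.factorial := by
        have h : ((2 * m : ℕ) : ℝ) / 2 + 1 = (m : ℝ) + 1 := by push_cast; ring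
        rw [h, Real.Gamma_nat_eq_factorial]
      have hp : (2 * x) ^ (2 * m) = (4 * x ^ 2) ^ m := by
        rw [pow_mul]; ring_nf
      have hdvd : (m.factorial * m.factorial : ℕ) ≤ (2 * m).factorial := by
        apply Nat.le_of_dvd (2 * m).factorial_pos
        have := Nat.factorial_mul_factorial_dvd_factorial_add m m
        rwa [show m + m = 2 * m by ring] at this
      have hfp : (0:ℝ) < m.factorial := by exact_mod_cast m.factorial_pos
      have h2m : (0:ℝ) < (2*m).factorial := by exact_mod_cast (2*m).factorial_pos
      rw [hG, hp, div_le_div_iff₀ h2m hfp]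
      calc (4 * x ^ 2) ^ m * (m.factorial : ℝ) * m.factorial
          = (4 * x ^ 2) ^ m * ((m.factorial * m.factorial : ℕ) : ℝ) := by push_cast; ring
        _ ≤ (4 * x ^ 2) ^ m * ((2 * m).factorial : ℝ) :=
            mul_le_mul_of_nonneg_left (by exact_mod_cast hdvd) (by positivity)
  · -- odd part
    apply Summable.of_nonneg_of_le ?_ ?_
      ((Real.summable_pow_div_factorial (4 * x ^ 2)).mul_left (2 * x))
    · intro m
      have := Real.Gamma_nonneg_of_nonneg
        (by positivity : (0:ℝ) ≤ ((2*m+1 : ℕ) : ℝ) / 2 + 1)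
      positivity
    · intro m
      have hG : Real.Gamma (((2 * m + 1 : ℕ) : ℝ) / 2 + 1) ≤ ((m+1).factorial : ℝ) := by
        have harg : ((2 * m + 1 : ℕ) : ℝ) / 2 + 1 = (m : ℝ) + 3/2 := by push_cast; ring
        rw [harg]
        have h1 : Real.Gamma ((m : ℝ) + 3/2)
            ≤ max (Real.Gamma 1) (Real.Gamma ((m : ℝ) + 2)) :=
          Gamma_le_max one_pos (by push_cast; linarith [Nat.cast_nonneg (α := ℝ) m])
            (by linarith [Nat.cast_nonneg (α := ℝ) m])
        have h2 : Real.Gamma ((m : ℝ) + 2) = ((m+1).factorial : ℝ) := by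
          rw [show ((m:ℝ) + 2) = ((m+1 : ℕ) : ℝ) + 1 by push_cast; ring,
            Real.Gamma_nat_eq_factorial]
        have h3 : (1:ℝ) ≤ ((m+1).factorial : ℝ) := by
          exact_mod_cast Nat.one_le_iff_ne_zero.mpr (m+1).factorial_ne_zero
        rw [Real.Gamma_one, h2] at h1
        exact h1.trans (max_le h3 le_rfl)
      have hdvd : (m.factorial * (m+1).factorial : ℕ) ≤ (2 * m + 1).factorial := by
        apply Nat.le_of_dvd (2 * m + 1).factorial_pos
        have := Nat.factorial_mul_factorial_dvd_factorial_add m (m + 1)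
        rwa [show m + (m + 1) = 2 * m + 1 by ring] at this
      have hp : (2 * x) ^ (2 * m + 1) = 2 * x * (4 * x ^ 2) ^ m := by
        rw [pow_succ, pow_mul]; ring_nf
      have hfp : (0:ℝ) < m.factorial := by exact_mod_cast m.factorial_pos
      have hfp1 : (0:ℝ) < (m+1).factorial := by exact_mod_cast (m+1).factorial_pos
      have h2m1 : (0:ℝ) < ((2*m+1).factorial : ℝ) := by exact_mod_cast (2*m+1).factorial_pos
      calc (2 * x) ^ (2*m+1) * Real.Gamma (((2 * m + 1 : ℕ) : ℝ) / 2 + 1) / (2*m+1).factorial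
          ≤ (2 * x) ^ (2*m+1) * ((m+1).factorial : ℝ) / (2*m+1).factorial := by
            gcongr
        _ ≤ (2 * x) ^ (2*m+1) * ((m+1).factorial : ℝ)
              / ((m.factorial * (m+1).factorial : ℕ) : ℝ) := by
            gcongr
        _ = (2 * x) ^ (2*m+1) / m.factorial := by
            push_cast
            field_simp
        _ = 2 * x * ((4 * x ^ 2) ^ m / m.factorial) := by rw [hp]; ring

/-- For fixed `x ≥ 0`, `1 - W(-2x, -α/2, 1) → erf(x)` as `α → 1⁻`. -/
theorem one_sub_wright_tendsto_erf (x : ℝ) (hx : 0 ≤ x) :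
    Tendsto (fun α : ℝ => 1 - wright (-(2 * x)) (-(α / 2)) 1)
      (nhdsWithin 1 (Set.Iio 1)) (nhds (erf x)) := by
  set f : ℝ → ℕ → ℝ :=
    fun α k => (-(2 * x)) ^ k / (k.factorial * Real.Gamma (-(α / 2) * k + 1)) with hf
  have hwright : ∀ α : ℝ, wright (-(2 * x)) (-(α / 2)) 1 = ∑' k, f α k := fun α => rfl
  have hpt : ∀ k : ℕ, Tendsto (fun α => f α k) (nhdsWithin 1 (Set.Iio 1)) (nhds (f 1 k)) := by
    intro k
    have hc : Continuous fun α : ℝ => f α k := by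
      have heq : (fun α : ℝ => f α k)
          = fun α : ℝ => (-(2 * x)) ^ k / k.factorial
              * (Real.Gamma (-(α / 2) * k + 1))⁻¹ := by
        funext α
        rw [hf]
        simp only
        rw [← div_div, div_eq_mul_inv]
      rw [heq]
      exact continuous_const.mul (contGammaInv.comp (by continuity))
    exact (hc.tendsto 1).mono_left nhdsWithin_le_nhds
  have hbd : ∀ᶠ α in nhdsWithin 1 (Set.Iio 1), ∀ k : ℕ, ‖f α k‖
      ≤ (2 * x) ^ k * (Real.Gamma (1/4) + 1 + Real.Gamma ((k : ℝ) / 2 + 1)) / k.factorial := by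
    have hmem : (1:ℝ) ∈ Set.Ioc (1/2 : ℝ) 1 := Set.mem_Ioc.mpr ⟨by norm_num, le_rfl⟩
    filter_upwards [Ioo_mem_nhdsLT_of_mem hmem] with α hα
    obtain ⟨hα1, hα2⟩ := hα
    intro k
    have hG14 := Real.Gamma_pos_of_pos (by norm_num : (0:ℝ) < 1/4)
    rcases Nat.eq_zero_or_pos k with rfl | hk
    · have : f α 0 = 1 := by
        rw [hf]; norm_num [Real.Gamma_one]
      rw [this]
      have hG1 := Real.Gamma_nonneg_of_nonneg (s := ((0:ℕ):ℝ)/2 + 1) (by norm_num)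
      have : Real.Gamma (((0:ℕ):ℝ)/2 + 1) = 1 := by norm_num [Real.Gamma_one]
      simp only [pow_zero, Nat.factorial_zero, Nat.cast_one, div_one, one_mul, this]
      rw [Real.norm_eq_abs, abs_one]
      linarith
    · have hk1 : (1:ℝ) ≤ (k:ℝ) := by exact_mod_cast hk
      set s : ℝ := α * k / 2 with hsdef
      have hs : 0 < s := by
        rw [hsdef]; nlinarith
      have harg : -(α / 2) * (k:ℝ) + 1 = 1 - s := by rw [hsdef]; ring
      have hkfp : (0:ℝ) < k.factorial := by exact_mod_cast k.factorial_pos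
      have hGbd : |(Real.Gamma (1 - s))⁻¹|
          ≤ Real.Gamma (1/4) + 1 + Real.Gamma ((k:ℝ)/2 + 1) := by
        rw [GammaInv_one_sub hs, abs_div, abs_mul,
          abs_of_pos (Real.Gamma_pos_of_pos hs), abs_of_pos Real.pi_pos]
        have hsin : |Real.sin (π * s)| ≤ 1 :=
          abs_le.mpr ⟨Real.neg_one_le_sin _, Real.sin_le_one _⟩
        have hmax : Real.Gamma s ≤ Real.Gamma (1/4) + 1 + Real.Gamma ((k:ℝ)/2 + 1) := by
          have h14 : (1/4 : ℝ) ≤ s := by rw [hsdef]; nlinarith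
          have hk2 : s ≤ (k:ℝ)/2 + 1 := by rw [hsdef]; nlinarith
          have h := Gamma_le_max (by norm_num : (0:ℝ) < 1/4) h14 hk2
          refine h.trans (max_le ?_ ?_)
          · have := Real.Gamma_nonneg_of_nonneg (s := (k:ℝ)/2 + 1) (by positivity)
            linarith
          · linarith
        have hstep : Real.Gamma s * |Real.sin (π * s)| / π ≤ Real.Gamma s := by
          have h1 : Real.Gamma s * |Real.sin (π * s)| ≤ Real.Gamma s * 1 := by
            gcongr

          have h2 : Real.Gamma s * |Real.sin (π * s)| / π
              ≤ Real.Gamma s * |Real.sin (π * s)| :=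
            div_le_self (by positivity) (by linarith [Real.pi_gt_three])
          linarith [mul_one (Real.Gamma s)]
        exact hstep.trans hmax
      have hnorm : ‖f α k‖ = (2*x)^k / k.factorial * |(Real.Gamma (1 - s))⁻¹| := by
        rw [hf]
        simp only
        rw [harg, ← div_div, div_eq_mul_inv, Real.norm_eq_abs, abs_mul, abs_inv, abs_div,
          abs_pow, abs_neg, abs_of_nonneg (by positivity : (0:ℝ) ≤ 2*x), abs_of_pos hkfp]
      rw [hnorm]
      calc (2*x)^k / k.factorial * |(Real.Gamma (1 - s))⁻¹|
          ≤ (2*x)^k / k.factorial * (Real.Gamma (1/4) + 1 + Real.Gamma ((k:ℝ)/2 + 1)) := by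
            gcongr
        _ = (2 * x) ^ k * (Real.Gamma (1/4) + 1 + Real.Gamma ((k : ℝ) / 2 + 1)) / k.factorial := by
            ring
  have hA := tendsto_tsum_of_dominated_convergence (summable_bound x hx) hpt hbd
  have hB : Tendsto (fun α : ℝ => 1 - wright (-(2 * x)) (-(α / 2)) 1) (nhdsWithin 1 (Set.Iio 1))
      (nhds (1 - ∑' k, f 1 k)) := by
    simp only [hwright]
    exact tendsto_const_nhds.sub hA
  have hval : 1 - ∑' k, f 1 k = erf x := by
    rw [erf, integral_exp_neg_sq_eq, ← wright_one_val x hx]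
  rwa [hval] at hB
end
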